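/- Let T > 0, Γ > 0, γ > 0, let B_x, B_y : [0,T] → ℝ be twice continuously differentiable with B_x(0)·B_y'(0) − B_y(0)·B_x'(0) ≠ 0, and let X, Y, Z : [0,∞) → ℝ be bounded functions such that for every k ∈ ℕ, X, Y, Z are differentiable on [2kT, (2k+1)T) (one-sidedly at 2kT) and satisfy there, with s = t − 2kT: X'(t) = 2B_y(s)Z(t) − 2ΓX(t), Y'(t) = −2B_x(s)Z(t) − 2ΓY(t), Z'(t) = 2B_x(s)Y(t) − 2B_y(s)X(t) − 2(Γ+γ)Z(t), and moreover Z' is differentiable from the right at each point 2kT with right second derivative Z''(2kT⁺). If Z(2kT) → 0, Z'(2kT⁺) → 0, and Z''(2kT⁺) → 0 as k → ∞, then X(2kT) → 0 and Y(2kT) → 0 as k → ∞; consequently X(2kT)² + Y(2kT)² + Z(2kT)² → 0. -/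

import Mathlib

open Set Filter MeasureTheory

/-- observability step. If the Bloch coordinates of the error satisfy
the forward equations on each interval `[2kT, (2k+1)T)` and `Z(2kT)`, `Z'(2kT⁺)`,
`Z''(2kT⁺)` all tend to `0`, then (using `Bx(0)·By'(0) − By(0)·Bx'(0) ≠ 0`)
`X(2kT) → 0` and `Y(2kT) → 0`, hence `X² + Y² + Z²` at `2kT` tends to `0`. -/
theorem observability_step
    (T Γ γ : ℝ) (hT : 0 < T) (hΓ : 0 < Γ) (hγ : 0 < γ)
    (Bx By : ℝ → ℝ)
    (hBx : ContDiffOn ℝ 2 Bx (Icc 0 T)) (hBy : ContDiffOn ℝ 2 By (Icc 0 T))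
    (hnondeg : Bx 0 * derivWithin By (Icc 0 T) 0 - By 0 * derivWithin Bx (Icc 0 T) 0 ≠ 0)
    (X Y Z X' Y' Z' : ℝ → ℝ)
    (hXbdd : ∃ C : ℝ, ∀ t : ℝ, 0 ≤ t → |X t| ≤ C)
    (hYbdd : ∃ C : ℝ, ∀ t : ℝ, 0 ≤ t → |Y t| ≤ C)
    (hZbdd : ∃ C : ℝ, ∀ t : ℝ, 0 ≤ t → |Z t| ≤ C)
    (hXd : ∀ k : ℕ, ∀ t ∈ Ico (2*(k:ℝ)*T) ((2*(k:ℝ)+1)*T),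
      HasDerivWithinAt X (X' t) (Ico (2*(k:ℝ)*T) ((2*(k:ℝ)+1)*T)) t)
    (hYd : ∀ k : ℕ, ∀ t ∈ Ico (2*(k:ℝ)*T) ((2*(k:ℝ)+1)*T),
      HasDerivWithinAt Y (Y' t) (Ico (2*(k:ℝ)*T) ((2*(k:ℝ)+1)*T)) t)
    (hZd : ∀ k : ℕ, ∀ t ∈ Ico (2*(k:ℝ)*T) ((2*(k:ℝ)+1)*T),
      HasDerivWithinAt Z (Z' t) (Ico (2*(k:ℝ)*T) ((2*(k:ℝ)+1)*T)) t)
    (hXeq : ∀ k : ℕ, ∀ t ∈ Ico (2*(k:ℝ)*T) ((2*(k:ℝ)+1)*T),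
      X' t = 2 * By (t - 2*(k:ℝ)*T) * Z t - 2 * Γ * X t)
    (hYeq : ∀ k : ℕ, ∀ t ∈ Ico (2*(k:ℝ)*T) ((2*(k:ℝ)+1)*T),
      Y' t = -(2 * Bx (t - 2*(k:ℝ)*T) * Z t) - 2 * Γ * Y t)
    (hZeq : ∀ k : ℕ, ∀ t ∈ Ico (2*(k:ℝ)*T) ((2*(k:ℝ)+1)*T),
      Z' t = 2 * Bx (t - 2*(k:ℝ)*T) * Y t - 2 * By (t - 2*(k:ℝ)*T) * X t
        - 2 * (Γ + γ) * Z t)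
    (Z'' : ℕ → ℝ)
    (hZd2 : ∀ k : ℕ, HasDerivWithinAt Z' (Z'' k) (Ici (2*(k:ℝ)*T)) (2*(k:ℝ)*T))
    (hZlim : Tendsto (fun k : ℕ => Z (2*(k:ℝ)*T)) atTop (nhds 0))
    (hZ'lim : Tendsto (fun k : ℕ => Z' (2*(k:ℝ)*T)) atTop (nhds 0))
    (hZ''lim : Tendsto (fun k : ℕ => Z'' k) atTop (nhds 0)) :
    Tendsto (fun k : ℕ => X (2*(k:ℝ)*T)) atTop (nhds 0) ∧
    Tendsto (fun k : ℕ => Y (2*(k:ℝ)*T)) atTop (nhds 0) ∧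
    Tendsto (fun k : ℕ =>
      (X (2*(k:ℝ)*T))^2 + (Y (2*(k:ℝ)*T))^2 + (Z (2*(k:ℝ)*T))^2) atTop (nhds 0) := by

  -- abbreviations
  set px := Bx 0 with hpx
  set py := By 0 with hpy
  set qx := derivWithin Bx (Icc 0 T) 0 with hqx
  set qy := derivWithin By (Icc 0 T) 0 with hqy
  have h0mem : (0:ℝ) ∈ Icc (0:ℝ) T := ⟨le_refl 0, hT.le⟩
  have hBxd : HasDerivWithinAt Bx qx (Icc 0 T) 0 :=
    ((hBx.differentiableOn (by norm_num)) 0 h0mem).hasDerivWithinAt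
  have hByd : HasDerivWithinAt By qy (Icc 0 T) 0 :=
    ((hBy.differentiableOn (by norm_num)) 0 h0mem).hasDerivWithinAt
  -- key pointwise identities
  have key : ∀ k : ℕ,
      2*px*Y (2*(k:ℝ)*T) - 2*py*X (2*(k:ℝ)*T)
        = Z' (2*(k:ℝ)*T) + 2*(Γ+γ)*Z (2*(k:ℝ)*T) ∧
      2*qx*Y (2*(k:ℝ)*T) - 2*qy*X (2*(k:ℝ)*T)
        = Z'' k + 2*(Γ+γ)*Z' (2*(k:ℝ)*T) + 4*(px^2+py^2)*Z (2*(k:ℝ)*T)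
          + 2*Γ*(Z' (2*(k:ℝ)*T) + 2*(Γ+γ)*Z (2*(k:ℝ)*T)) := by
    intro k
    set t0 : ℝ := 2*(k:ℝ)*T with ht0
    set t1 : ℝ := (2*(k:ℝ)+1)*T with ht1
    have ht01 : t0 < t1 := by
      have : t1 - t0 = T := by rw [ht0, ht1]; ring
      linarith
    have ht0s : t0 ∈ Ico t0 t1 := ⟨le_refl _, ht01⟩
    have hmaps : MapsTo (fun t => t - t0) (Ico t0 t1) (Icc 0 T) := by
      intro t ht
      have h1 : t1 = t0 + T := by rw [ht0, ht1]; ring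
      have h2 := ht.1
      have h3 := ht.2
      rw [h1] at h3
      show t - t0 ∈ Icc 0 T
      exact ⟨by linarith, by linarith⟩
    have hsub : HasDerivWithinAt (fun t : ℝ => t - t0) 1 (Ico t0 t1) t0 := by
      simpa using (hasDerivWithinAt_id t0 (Ico t0 t1)).sub_const t0
    have hBxc : HasDerivWithinAt (fun t => Bx (t - t0)) qx (Ico t0 t1) t0 := by
      have h : HasDerivWithinAt (Bx ∘ (fun t : ℝ => t - t0)) (qx * 1) (Ico t0 t1) t0 :=
        HasDerivWithinAt.comp t0 (by simpa using hBxd) hsub hmaps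
      simpa [Function.comp_def] using h
    have hByc : HasDerivWithinAt (fun t => By (t - t0)) qy (Ico t0 t1) t0 := by
      have h : HasDerivWithinAt (By ∘ (fun t : ℝ => t - t0)) (qy * 1) (Ico t0 t1) t0 :=
        HasDerivWithinAt.comp t0 (by simpa using hByd) hsub hmaps
      simpa [Function.comp_def] using h
    have hXt : HasDerivWithinAt X (X' t0) (Ico t0 t1) t0 := hXd k t0 ht0s
    have hYt : HasDerivWithinAt Y (Y' t0) (Ico t0 t1) t0 := hYd k t0 ht0s
    have hZt : HasDerivWithinAt Z (Z' t0) (Ico t0 t1) t0 := hZd k t0 ht0s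
    have hg : HasDerivWithinAt
        (fun t => 2 * Bx (t - t0) * Y t - 2 * By (t - t0) * X t - 2 * (Γ + γ) * Z t)
        ((2*qx * Y t0 + 2 * Bx (t0 - t0) * Y' t0)
          - (2*qy * X t0 + 2 * By (t0 - t0) * X' t0)
          - 2*(Γ+γ) * Z' t0) (Ico t0 t1) t0 := by
      exact (((hBxc.const_mul 2).mul hYt).sub ((hByc.const_mul 2).mul hXt)).sub
        (hZt.const_mul (2*(Γ+γ)))
    have hZ'd : HasDerivWithinAt Z'
        ((2*qx * Y t0 + 2 * Bx (t0 - t0) * Y' t0)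
          - (2*qy * X t0 + 2 * By (t0 - t0) * X' t0)
          - 2*(Γ+γ) * Z' t0) (Ico t0 t1) t0 := by
      refine hg.congr (fun t ht => hZeq k t ht) (hZeq k t0 ht0s)
    have hZ'dIci : HasDerivWithinAt Z'
        ((2*qx * Y t0 + 2 * Bx (t0 - t0) * Y' t0)
          - (2*qy * X t0 + 2 * By (t0 - t0) * X' t0)
          - 2*(Γ+γ) * Z' t0) (Ici t0) t0 :=
      hZ'd.mono_of_mem_nhdsWithin (Ico_mem_nhdsGE ht01)
    have huniq : Z'' k = (2*qx * Y t0 + 2 * Bx (t0 - t0) * Y' t0)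
          - (2*qy * X t0 + 2 * By (t0 - t0) * X' t0)
          - 2*(Γ+γ) * Z' t0 := by
      have h1 := (hZd2 k).derivWithin (uniqueDiffOn_Ici t0 t0 self_mem_Ici)
      have h2 := hZ'dIci.derivWithin (uniqueDiffOn_Ici t0 t0 self_mem_Ici)
      rw [← h1, ← h2]
    have hss : t0 - t0 = (0:ℝ) := sub_self t0
    have heq1 : Z' t0 = 2 * px * Y t0 - 2 * py * X t0 - 2*(Γ+γ) * Z t0 := by
      have := hZeq k t0 ht0s
      rw [hss] at this; exact this
    have heqX : X' t0 = 2 * py * Z t0 - 2 * Γ * X t0 := by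
      have := hXeq k t0 ht0s
      rw [hss] at this; exact this
    have heqY : Y' t0 = -(2 * px * Z t0) - 2 * Γ * Y t0 := by
      have := hYeq k t0 ht0s
      rw [hss] at this; exact this
    rw [hss] at huniq
    constructor
    · linarith [heq1]
    · rw [huniq, heqX, heqY, heq1]; ring
  -- limits of the two linear combinations
  have hG : Tendsto (fun k : ℕ => Z' (2*(k:ℝ)*T) + 2*(Γ+γ)*Z (2*(k:ℝ)*T))
      atTop (nhds 0) := by
    have := hZ'lim.add (hZlim.const_mul (2*(Γ+γ)))
    simpa [mul_comm] using this
  have hF : Tendsto (fun k : ℕ => Z'' k + 2*(Γ+γ)*Z' (2*(k:ℝ)*T)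
      + 4*(px^2+py^2)*Z (2*(k:ℝ)*T)
      + 2*Γ*(Z' (2*(k:ℝ)*T) + 2*(Γ+γ)*Z (2*(k:ℝ)*T))) atTop (nhds 0) := by
    have := ((hZ''lim.add (hZ'lim.const_mul (2*(Γ+γ)))).add
      (hZlim.const_mul (4*(px^2+py^2)))).add (hG.const_mul (2*Γ))
    simpa [mul_comm] using this
  have hU : Tendsto (fun k : ℕ => 2*px*Y (2*(k:ℝ)*T) - 2*py*X (2*(k:ℝ)*T))
      atTop (nhds 0) := hG.congr (fun k => ((key k).1).symm)
  have hV : Tendsto (fun k : ℕ => 2*qx*Y (2*(k:ℝ)*T) - 2*qy*X (2*(k:ℝ)*T))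
      atTop (nhds 0) := hF.congr (fun k => ((key k).2).symm)
  set d : ℝ := px * qy - py * qx with hd
  have hdne : d ≠ 0 := hnondeg
  have hXlim : Tendsto (fun k : ℕ => X (2*(k:ℝ)*T)) atTop (nhds 0) := by
    have h1 : Tendsto (fun k : ℕ =>
        (qx * (2*px*Y (2*(k:ℝ)*T) - 2*py*X (2*(k:ℝ)*T))
          - px * (2*qx*Y (2*(k:ℝ)*T) - 2*qy*X (2*(k:ℝ)*T))) / (2*d))
        atTop (nhds 0) := by
      have := ((hU.const_mul qx).sub (hV.const_mul px)).div_const (2*d)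
      simpa using this
    refine h1.congr (fun k => ?_)
    field_simp
    ring
  have hYlim : Tendsto (fun k : ℕ => Y (2*(k:ℝ)*T)) atTop (nhds 0) := by
    have h1 : Tendsto (fun k : ℕ =>
        (qy * (2*px*Y (2*(k:ℝ)*T) - 2*py*X (2*(k:ℝ)*T))
          - py * (2*qx*Y (2*(k:ℝ)*T) - 2*qy*X (2*(k:ℝ)*T))) / (2*d))
        atTop (nhds 0) := by
      have := ((hU.const_mul qy).sub (hV.const_mul py)).div_const (2*d)
      simpa using this
    refine h1.congr (fun k => ?_)
    field_simp
    ring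
  refine ⟨hXlim, hYlim, ?_⟩
  have := ((hXlim.pow 2).add (hYlim.pow 2)).add (hZlim.pow 2)
  simpa using this
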